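/- Let X be a countably tight Hausdorff semitopological semilattice and L ⊆ X a chain order-isomorphic to ω₁ with the minimum operation. Then the closure of L in X is not compact. -/

import Mathlib

/-- A space is countably tight if every point of the closure of a set lies in the closure of
a countable subset. -/
def CountablyTight (X : Type*) [TopologicalSpace X] : Prop :=
  ∀ (A : Set X) (x : X), x ∈ closure A → ∃ B ⊆ A, B.Countable ∧ x ∈ closure B

/-- In a countably tight Hausdorff semitopological semilattice, the closure of a chain
order-isomorphic to `(ω₁, min)` is not compact. -/
theorem closure_omega1_chain_not_compact {X : Type*} [SemilatticeInf X] [TopologicalSpace X]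
    [T2Space X]
    (hcont : ∀ s : X, Continuous fun x => s ⊓ x)
    (htight : CountablyTight X)
    (L : Set X)
    (hiso : Nonempty ((Set.Iio (Cardinal.aleph 1).ord) ≃o L)) :
    ¬ IsCompact (closure L) := by
  intro hK
  obtain ⟨e⟩ := hiso
  set ω₁ := (Cardinal.aleph 1).ord with hω₁
  have hlim : Order.IsSuccLimit ω₁ := Cardinal.isSuccLimit_ord (Cardinal.aleph0_le_aleph 1)
  have hne : Nonempty (Set.Iio ω₁) := ⟨⟨0, hlim.pos⟩⟩
  -- the chain
  set x : Set.Iio ω₁ → X := fun α => (e α : X) with hx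
  have hmono : Monotone x := fun a b hab => Subtype.coe_le_coe.mpr (e.monotone hab)
  have hstrict : StrictMono x := fun a b hab => Subtype.coe_lt_coe.mpr (e.strictMono hab)
  have hxL : ∀ α, x α ∈ L := fun α => (e α).2
  -- tail sets and their closures
  set S : Set.Iio ω₁ → Set X := fun α => x '' Set.Ici α with hS
  set C : Set.Iio ω₁ → Set X := fun α => closure (S α) with hC
  have hSL : ∀ α, S α ⊆ L := by rintro α _ ⟨β, _, rfl⟩; exact hxL β
  have hCcl : ∀ α, IsClosed (C α) := fun α => isClosed_closure
  have hCsub : ∀ α, C α ⊆ closure L := fun α => closure_mono (hSL α)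
  have hCne : ∀ α, (C α).Nonempty := fun α => ⟨x α, subset_closure ⟨α, le_refl α, rfl⟩⟩
  have hCcomp : ∀ α, IsCompact (C α) := fun α => hK.of_isClosed_subset (hCcl α) (hCsub α)
  have hdir : Directed (· ⊇ ·) C := by
    intro a b
    exact ⟨max a b, closure_mono (Set.image_mono fun β hβ => le_trans (le_max_left a b) hβ),
      closure_mono (Set.image_mono fun β hβ => le_trans (le_max_right a b) hβ)⟩
  obtain ⟨y, hy⟩ := IsCompact.nonempty_iInter_of_directed_nonempty_isCompact_isClosed
    C hdir hCne hCcomp hCcl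
  have hyC : ∀ α, y ∈ C α := fun α => Set.mem_iInter.mp hy α
  -- Step 1 : x α ⊓ y = x α for all α
  have hstep1 : ∀ α, x α ⊓ y = x α := by
    intro α
    have h1 : x α ⊓ y ∈ closure ((fun t => x α ⊓ t) '' S α) := by
      apply image_closure_subset_closure_image (hcont (x α))
      exact ⟨y, hyC α, rfl⟩
    have h2 : (fun t => x α ⊓ t) '' S α ⊆ {x α} := by
      rintro _ ⟨_, ⟨β, hβ, rfl⟩, rfl⟩
      simp only [Set.mem_singleton_iff]
      exact inf_eq_left.mpr (hmono hβ)
    have := closure_mono h2 h1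
    rwa [closure_singleton, Set.mem_singleton_iff] at this
  -- y is in the closure of L, apply countable tightness
  have hyL : y ∈ closure L := hCsub hne.some (hyC hne.some)
  obtain ⟨B, hBL, hBc, hyB⟩ := htight L y hyL
  -- indices of B are bounded by some γ < ω₁
  have hBne : B.Nonempty := by
    rcases B.eq_empty_or_nonempty with h | h
    · rw [h, closure_empty] at hyB; exact absurd hyB (Set.notMem_empty y)
    · exact h
  obtain ⟨f, hf⟩ := Set.Countable.exists_eq_range hBc hBne
  have hfB : ∀ n, f n ∈ B := fun n => hf ▸ Set.mem_range_self n
  set g : ℕ → Ordinal := fun n => (e.symm ⟨f n, hBL (hfB n)⟩ : Ordinal) with hg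
  set γ : Ordinal := iSup g with hγdef
  have hγ : γ < ω₁ := by
    rw [hγdef, hω₁]
    apply Ordinal.iSup_lt_ord_lift
    · rw [Cardinal.isRegular_aleph_one.cof_eq]
      simpa using Cardinal.aleph0_lt_aleph_one
    · exact fun n => (e.symm ⟨f n, hBL (hfB n)⟩).2
  -- key claim : y = x δ for every δ with γ ≤ δ
  have hkey : ∀ δ : Set.Iio ω₁, γ ≤ (δ : Ordinal) → y = x δ := by
    intro δ hδ
    have heq : Set.EqOn (fun t => x δ ⊓ t) id B := by
      intro b hb
      have hble : b ≤ x δ := by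
        obtain ⟨n, rfl⟩ : ∃ n, f n = b := by rwa [← Set.mem_range, ← hf]
        have h1 : g n ≤ γ := Ordinal.le_iSup g n
        have h2 : x (e.symm ⟨f n, hBL (hfB n)⟩) = f n := by
          simp [hx, OrderIso.apply_symm_apply]
        calc f n = x (e.symm ⟨f n, hBL (hfB n)⟩) := h2.symm
          _ ≤ x δ := hmono (Subtype.coe_le_coe.mp (le_trans h1 hδ))
      simpa using inf_eq_right.mpr hble
    have := heq.closure (hcont (x δ)) continuous_id
    have h3 : x δ ⊓ y = y := this hyB
    rw [← hstep1 δ, h3]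
  -- contradiction : x γ' = x (γ'+1)
  have hγ1 : γ + 1 < ω₁ := hlim.succ_lt hγ
  have e1 : y = x ⟨γ, hγ⟩ := hkey ⟨γ, hγ⟩ le_rfl
  have e2 : y = x ⟨γ + 1, hγ1⟩ := hkey ⟨γ + 1, hγ1⟩ (le_of_lt (Order.lt_succ γ))
  have : (⟨γ, hγ⟩ : Set.Iio ω₁) < ⟨γ + 1, hγ1⟩ := Subtype.mk_lt_mk.mpr (Order.lt_succ γ)
  exact absurd (e1.symm.trans e2) (ne_of_lt (hstrict this))
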